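/- For every α with 0 < α < 1 and every θ with 0 < θ < π/2, one has (cos θ)^α < cos(αθ), where (cos θ)^α denotes the real power of the positive real number cos θ. Consequently, the image of the circle {z : |z − 1/2| = 1/2} under the principal α-th power map z ↦ z^α is contained in {0, 1} ∪ ({w : |arg w| < απ/2} ∩ {w : |w − 1/2| < 1/2}). -/

import Mathlib

open Complex Real

lemma teardrop_aux (α : ℝ) (hα0 : 0 < α) (hα1 : α < 1) :
    ∀ θ : ℝ, 0 < θ → θ < Real.pi / 2 → Real.cos θ ^ α < Real.cos (α * θ) := by
  intro θ hθ0 hθ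
  have hπ := Real.pi_pos
  have hc : 0 < Real.cos θ := Real.cos_pos_of_mem_Ioo ⟨by linarith, hθ⟩
  have h1 : Real.cos θ ^ α * (1 : ℝ) ^ (1 - α) ≤ α * Real.cos θ + (1 - α) * 1 :=
    Real.geom_mean_le_arith_mean2_weighted hα0.le (by linarith) hc.le zero_le_one (by ring)
  rw [Real.one_rpow, mul_one, mul_one] at h1
  have hmem1 : θ ∈ Set.Icc (-(Real.pi / 2)) (Real.pi / 2) := ⟨by linarith, hθ.le⟩
  have hmem0 : (0 : ℝ) ∈ Set.Icc (-(Real.pi / 2)) (Real.pi / 2) := ⟨by linarith, by linarith⟩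
  have h2 := strictConcaveOn_cos_Icc.2 hmem1 hmem0 hθ0.ne'
    hα0 (by linarith : (0 : ℝ) < 1 - α) (by ring)
  simp only [smul_eq_mul, mul_zero, add_zero, Real.cos_zero, mul_one] at h2
  linarith

/-- For `0 < α < 1` and `0 < θ < π/2` one has `(cos θ)^α < cos (αθ)`, and
consequently the image of the circle `|z - 1/2| = 1/2` under the principal
`α`-th power lies in `{0,1} ∪ ({|arg w| < απ/2} ∩ D(1/2;1/2))`. -/
theorem teardrop_lemma (α θ : ℝ) (hα0 : 0 < α) (hα1 : α < 1)
    (hθ0 : 0 < θ) (hθ : θ < Real.pi / 2) :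
    Real.cos θ ^ α < Real.cos (α * θ) ∧
    ∀ z ∈ Metric.sphere (1 / 2 : ℂ) (1 / 2),
      z ^ (α : ℂ) ∈
        ({0, 1} : Set ℂ) ∪
          ({w : ℂ | |Complex.arg w| < α * Real.pi / 2} ∩
            Metric.ball (1 / 2 : ℂ) (1 / 2)) := by
  have hπ := Real.pi_pos
  refine ⟨teardrop_aux α hα0 hα1 θ hθ0 hθ, ?_⟩
  intro z hz
  rw [Metric.mem_sphere, Complex.dist_eq] at hz
  -- the circle equation: re² + im² = re
  have hnsq : Complex.normSq (z - 1 / 2) = 1 / 4 := by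
    rw [← Complex.sq_norm, hz]; norm_num
  have hre : z.re ^ 2 + z.im ^ 2 = z.re := by
    simp only [Complex.normSq_apply, Complex.sub_re, Complex.sub_im] at hnsq
    have : (1 / 2 : ℂ).re = 1 / 2 := by norm_num
    have him : (1 / 2 : ℂ).im = 0 := by norm_num
    rw [this, him] at hnsq
    nlinarith [hnsq]
  rcases eq_or_ne z 0 with rfl | hz0
  · left
    left
    have : (α : ℂ) ≠ 0 := by exact_mod_cast hα0.ne'
    simp [Complex.zero_cpow this]
  · -- z ≠ 0
    have habs_pos : 0 < ‖z‖ := norm_pos_iff.mpr hz0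
    have hsqabs : ‖z‖ ^ 2 = z.re := by
      rw [Complex.sq_norm, Complex.normSq_apply]; linarith [hre]
    have hre_pos : 0 < z.re := by
      rw [← hsqabs]; positivity
    set φ := Complex.arg z with hφ
    rcases eq_or_ne φ 0 with hφ0 | hφ0
    · -- z is a nonnegative real, hence z = 1
      have hzz : z.im = 0 ∧ 0 ≤ z.re := by
        have := Complex.arg_eq_zero_iff.mp hφ0
        exact ⟨this.2, this.1⟩
      have hz1 : z = 1 := by
        have h1 : z.re = 1 := by
          have h' := hre
          rw [hzz.1] at h'
          nlinarith [hre_pos]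
        apply Complex.ext <;> simp [h1, hzz.1]
      left; right; simp [hz1]
    · -- the main case
      have habsφ_lt : |φ| < Real.pi / 2 :=
        Complex.abs_arg_lt_pi_div_two_iff.mpr (Or.inl hre_pos)
      have habsφ_pos : 0 < |φ| := abs_pos.mpr hφ0
      have hcosφ : Real.cos φ = ‖z‖ := by
        rw [hφ, Complex.cos_arg hz0, ← hsqabs]
        field_simp
      set r := ‖z‖ with hr
      have hr1 : r = Real.cos |φ| := by rw [Real.cos_abs, hcosφ]
      -- compute z ^ α
      have habsw : ‖z ^ (α : ℂ)‖ = r ^ α := Complex.norm_cpow_real z α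
      have hargw : Complex.arg (z ^ (α : ℂ)) = α * φ := by
        rw [Complex.cpow_def_of_ne_zero hz0, Complex.log, mul_comm]
        have : (α : ℂ) * (↑(Real.log r) + ↑φ * Complex.I)
            = ↑(α * Real.log r) + ↑(α * φ) * Complex.I := by
          push_cast; ring
        rw [this, Complex.exp_add, ← Complex.ofReal_exp]
        rw [Complex.arg_real_mul _ (Real.exp_pos _), Complex.exp_mul_I,
          Complex.arg_cos_add_sin_mul_I]
        constructor
        · nlinarith [abs_le.mp habsφ_lt.le, mul_pos hα0 habsφ_pos, neg_abs_le (α * φ),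
            abs_mul α φ, abs_of_pos hα0]
        · nlinarith [abs_le.mp habsφ_lt.le, le_abs_self (α * φ),
            abs_mul α φ, abs_of_pos hα0]
      have key : r ^ α < Real.cos (α * φ) := by
        have h := teardrop_aux α hα0 hα1 |φ| habsφ_pos habsφ_lt
        rw [← hr1] at h
        have : Real.cos (α * |φ|) = Real.cos (α * φ) := by
          rcases abs_cases φ with ⟨h', _⟩ | ⟨h', _⟩
          · rw [h']
          · rw [h', mul_neg, Real.cos_neg]
        linarith [h, this.symm.le, this.le]
      right
      constructor
      · show |Complex.arg (z ^ (α : ℂ))| < α * Real.pi / 2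
        rw [hargw, abs_mul, abs_of_pos hα0]
        calc α * |φ| < α * (Real.pi / 2) := by
              exact (mul_lt_mul_iff_right₀ hα0).mpr habsφ_lt
          _ = α * Real.pi / 2 := by ring
      · rw [Metric.mem_ball, Complex.dist_eq]
        set w := z ^ (α : ℂ) with hw
        have hrα : 0 < r ^ α := Real.rpow_pos_of_pos habs_pos α
        have hwre : w.re = r ^ α * Real.cos (α * φ) := by
          rw [← Complex.norm_mul_cos_arg w, habsw, hargw]
        have hwsq : w.re ^ 2 + w.im ^ 2 = (r ^ α) ^ 2 := by
          rw [← habsw, Complex.sq_norm, Complex.normSq_apply]; ring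
        have h14 : ‖w - 1 / 2‖ ^ 2 < (1 / 2 : ℝ) ^ 2 := by
          rw [Complex.sq_norm]
          simp only [Complex.normSq_apply, Complex.sub_re, Complex.sub_im]
          have h1 : (1 / 2 : ℂ).re = 1 / 2 := by norm_num
          have h2 : (1 / 2 : ℂ).im = 0 := by norm_num
          rw [h1, h2]
          nlinarith [hwsq, hwre, key, hrα]
        exact lt_of_pow_lt_pow_left₀ 2 (by norm_num) h14
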